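/- Let F be an upset of a De Morgan lattice L and define the relation Ω on L by: a Ω b if and only if for all c, d ∈ L, ((a ⊓ c) ⊔ d ∈ F ↔ (b ⊓ c) ⊔ d ∈ F) and ((¬a ⊓ c) ⊔ d ∈ F ↔ (¬b ⊓ c) ⊔ d ∈ F). Then Ω is a congruence on L that is compatible with F (a ∈ F and a Ω b imply b ∈ F), and every congruence on L compatible with F is contained in Ω. (That is, Ω is the Leibniz congruence of the matrix (L, F).) -/
import Mathlib


/-- A De Morgan lattice: a distributive lattice with an antitone involution. -/
class DeMorgan (L : Type*) extends DistribLattice L where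
  dneg : L → L
  dneg_dneg : ∀ x : L, dneg (dneg x) = x
  dneg_sup : ∀ x y : L, dneg (x ⊔ y) = dneg x ⊓ dneg y

prefix:max "∼" => DeMorgan.dneg

section Defs

variable {α : Type*}

/-- An upward closed subset of a lattice. -/
def IsUpset [Lattice α] (F : Set α) : Prop :=
  ∀ ⦃x y : α⦄, x ∈ F → x ≤ y → y ∈ F

/-- A lattice filter: an upset closed under binary meets. -/
def IsLatFilter [Lattice α] (F : Set α) : Prop :=
  IsUpset F ∧ ∀ x y : α, x ∈ F → y ∈ F → x ⊓ y ∈ F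

/-- An `n`-filter: an upset such that for every nonempty finite `Y`, if the meet of
every nonempty subset of `Y` of size at most `n` lies in `F`, then so does the meet of `Y`. -/
def IsNFilter [Lattice α] (n : ℕ) (F : Set α) : Prop :=
  IsUpset F ∧ ∀ (Y : Finset α) (hY : Y.Nonempty),
    (∀ (X : Finset α) (hX : X.Nonempty), X ⊆ Y → X.card ≤ n → X.inf' hX id ∈ F) →
    Y.inf' hY id ∈ F

/-- A prime upset: `x ⊔ y ∈ F` implies `x ∈ F` or `y ∈ F`. -/
def IsPrimeUpset [Lattice α] (F : Set α) : Prop :=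
  ∀ x y : α, x ⊔ y ∈ F → x ∈ F ∨ y ∈ F

/-- A downward closed subset of a lattice. -/
def IsDownset [Lattice α] (I : Set α) : Prop :=
  ∀ ⦃x y : α⦄, x ∈ I → y ≤ x → y ∈ I

/-- A lattice ideal: a downset closed under binary joins. -/
def IsIdeal [Lattice α] (I : Set α) : Prop :=
  IsDownset I ∧ ∀ x y : α, x ∈ I → y ∈ I → x ⊔ y ∈ I

/-- An `n`-ideal: the order dual notion of an `n`-filter. -/
def IsNIdeal [Lattice α] (n : ℕ) (I : Set α) : Prop :=
  IsDownset I ∧ ∀ (Y : Finset α) (hY : Y.Nonempty),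
    (∀ (X : Finset α) (hX : X.Nonempty), X ⊆ Y → X.card ≤ n → X.sup' hX id ∈ I) →
    Y.sup' hY id ∈ I

variable {L : Type*} [DeMorgan L]

/-- Almost complete upset: `x ∈ F` implies `x ⊓ (y ⊔ ∼y) ∈ F`. -/
def AlmostComplete (F : Set L) : Prop := ∀ x ∈ F, ∀ y : L, x ⊓ (y ⊔ ∼y) ∈ F

/-- Complete upset: almost complete and nonempty. -/
def IsCompleteUpset (F : Set L) : Prop := AlmostComplete F ∧ F.Nonempty

/-- Almost consistent upset: `(x ⊓ ∼x) ⊔ y ∈ F` implies `y ∈ F`. -/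
def AlmostConsistent (F : Set L) : Prop := ∀ x y : L, (x ⊓ ∼x) ⊔ y ∈ F → y ∈ F

/-- Consistent upset: almost consistent and not total. -/
def IsConsistentUpset (F : Set L) : Prop := AlmostConsistent F ∧ F ≠ Set.univ

/-- Classical upset: complete and consistent. -/
def IsClassicalUpset (F : Set L) : Prop := IsCompleteUpset F ∧ IsConsistentUpset F

/-- Kalman upset. -/
def IsKalmanUpset (F : Set L) : Prop :=
  ∀ x y z u : L, ((x ⊓ ∼x) ⊓ z) ⊔ u ∈ F → ((y ⊔ ∼y) ⊓ z) ⊔ u ∈ F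

/-- A homomorphism of De Morgan lattices. -/
def IsDMHom {L M : Type*} [DeMorgan L] [DeMorgan M] (h : L → M) : Prop :=
  (∀ x y : L, h (x ⊓ y) = h x ⊓ h y) ∧ (∀ x y : L, h (x ⊔ y) = h x ⊔ h y) ∧
    ∀ x : L, h (∼x) = ∼(h x)

/-- The filter generated by all elements of the form `x ⊔ ∼x`. -/
def Fcomp (L : Type*) [DeMorgan L] : Set L :=
  {a | ∃ (s : Finset L) (hs : s.Nonempty), s.inf' hs (fun x => x ⊔ ∼x) ≤ a}

/-- The `n`-filter generated by a set. -/
def nFilterGen (n : ℕ) (U : Set L) : Set L :=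
  ⋂₀ {F : Set L | IsNFilter n F ∧ U ⊆ F}

/-- `Comp U`. -/
def CompCl (U : Set L) : Set L := {x | ∃ a ∈ U, ∃ f ∈ Fcomp L, a ⊓ f ≤ x}

/-- `Cons U`. -/
def ConsCl (U : Set L) : Set L := {x | ∃ f ∈ Fcomp L, ∼f ⊔ x ∈ U}

/-- A congruence of De Morgan lattices, as a binary relation. -/
def IsCongruence (θ : L → L → Prop) : Prop :=
  Equivalence θ ∧
  (∀ a b c d : L, θ a b → θ c d → θ (a ⊓ c) (b ⊓ d)) ∧
  (∀ a b c d : L, θ a b → θ c d → θ (a ⊔ c) (b ⊔ d)) ∧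
  ∀ a b : L, θ a b → θ (∼a) (∼b)

end Defs

/-- The four-element De Morgan lattice `DM₁` on `Bool × Bool`. -/
instance : DeMorgan (Bool × Bool) :=
  { (inferInstance : DistribLattice (Bool × Bool)) with
    dneg := fun p => (!p.2, !p.1)
    dneg_dneg := by decide
    dneg_sup := by decide }

/-- Powers of `DM₁`, with componentwise operations. -/
instance {ι : Type*} : DeMorgan (ι → Bool × Bool) :=
  { (inferInstance : DistribLattice (ι → Bool × Bool)) with
    dneg := fun f i => ∼(f i)
    dneg_dneg := fun f => funext fun i => DeMorgan.dneg_dneg (f i)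
    dneg_sup := fun f g => funext fun i => DeMorgan.dneg_sup (f i) (g i) }

lemma DeMorgan.dneg_inf' {L : Type*} [DeMorgan L] (x y : L) : ∼(x ⊓ y) = ∼x ⊔ ∼y := by
  have h := DeMorgan.dneg_sup (∼x) (∼y)
  rw [DeMorgan.dneg_dneg, DeMorgan.dneg_dneg] at h
  rw [← h, DeMorgan.dneg_dneg]

lemma aux_meet19 {L : Type*} [DeMorgan L] (F : Set L) {a b x y : L}
    (h1 : ∀ c d : L, (a ⊓ c) ⊔ d ∈ F ↔ (b ⊓ c) ⊔ d ∈ F)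
    (h2 : ∀ c d : L, (x ⊓ c) ⊔ d ∈ F ↔ (y ⊓ c) ⊔ d ∈ F) :
    ∀ c d : L, ((a ⊓ x) ⊓ c) ⊔ d ∈ F ↔ ((b ⊓ y) ⊓ c) ⊔ d ∈ F := by
  intro c d
  have e1 : (a ⊓ x) ⊓ c = a ⊓ (x ⊓ c) := inf_assoc ..
  have e2 : b ⊓ (x ⊓ c) = x ⊓ (b ⊓ c) := inf_left_comm ..
  have e3 : y ⊓ (b ⊓ c) = (b ⊓ y) ⊓ c := by
    rw [inf_left_comm, inf_assoc]
  rw [e1]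
  refine (h1 _ _).trans ?_
  rw [e2]
  refine (h2 _ _).trans ?_
  rw [e3]

lemma aux_join19 {L : Type*} [DeMorgan L] (F : Set L) {a b x y : L}
    (h1 : ∀ c d : L, (a ⊓ c) ⊔ d ∈ F ↔ (b ⊓ c) ⊔ d ∈ F)
    (h2 : ∀ c d : L, (x ⊓ c) ⊔ d ∈ F ↔ (y ⊓ c) ⊔ d ∈ F) :
    ∀ c d : L, ((a ⊔ x) ⊓ c) ⊔ d ∈ F ↔ ((b ⊔ y) ⊓ c) ⊔ d ∈ F := by
  intro c d
  have e1 : ((a ⊔ x) ⊓ c) ⊔ d = (a ⊓ c) ⊔ ((x ⊓ c) ⊔ d) := by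
    rw [inf_sup_right, sup_assoc]
  have e2 : (b ⊓ c) ⊔ ((x ⊓ c) ⊔ d) = (x ⊓ c) ⊔ ((b ⊓ c) ⊔ d) := sup_left_comm ..
  have e3 : (y ⊓ c) ⊔ ((b ⊓ c) ⊔ d) = ((b ⊔ y) ⊓ c) ⊔ d := by
    rw [inf_sup_right, sup_left_comm, ← sup_assoc]
  rw [e1]
  refine (h1 _ _).trans ?_
  rw [e2]
  refine (h2 _ _).trans ?_
  rw [e3]

/-- the displayed relation is the Leibniz congruence of the matrix `(L, F)`:
the largest congruence of `L` compatible with `F`. -/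
theorem statement19 {L : Type*} [DeMorgan L] [Nonempty L] (F : Set L) (hF : IsUpset F)
    (Ω : L → L → Prop)
    (hΩ : ∀ a b : L, Ω a b ↔ ∀ c d : L,
      (((a ⊓ c) ⊔ d ∈ F) ↔ ((b ⊓ c) ⊔ d ∈ F)) ∧
      (((∼a ⊓ c) ⊔ d ∈ F) ↔ ((∼b ⊓ c) ⊔ d ∈ F))) :
    IsCongruence Ω ∧
    (∀ a b : L, a ∈ F → Ω a b → b ∈ F) ∧
    (∀ θ : L → L → Prop, IsCongruence θ → (∀ a b : L, a ∈ F → θ a b → b ∈ F) →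
      ∀ a b : L, θ a b → Ω a b) := by
  refine ⟨⟨⟨?_, ?_, ?_⟩, ?_, ?_, ?_⟩, ?_, ?_⟩
  · intro a; rw [hΩ]; intro c d; exact ⟨Iff.rfl, Iff.rfl⟩
  · intro a b h; rw [hΩ] at h ⊢; intro c d
    exact ⟨((h c d).1).symm, ((h c d).2).symm⟩
  · intro a b c h1 h2; rw [hΩ] at h1 h2 ⊢; intro e f
    exact ⟨((h1 e f).1).trans ((h2 e f).1), ((h1 e f).2).trans ((h2 e f).2)⟩
  · intro a b x y hab hxy
    rw [hΩ] at hab hxy ⊢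
    have h1 := fun c d => (hab c d).1
    have h1' := fun c d => (hab c d).2
    have h2 := fun c d => (hxy c d).1
    have h2' := fun c d => (hxy c d).2
    intro c d
    refine ⟨aux_meet19 F h1 h2 c d, ?_⟩
    rw [DeMorgan.dneg_inf', DeMorgan.dneg_inf']
    exact aux_join19 F h1' h2' c d
  · intro a b x y hab hxy
    rw [hΩ] at hab hxy ⊢
    have h1 := fun c d => (hab c d).1
    have h1' := fun c d => (hab c d).2
    have h2 := fun c d => (hxy c d).1
    have h2' := fun c d => (hxy c d).2
    intro c d
    refine ⟨aux_join19 F h1 h2 c d, ?_⟩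
    rw [DeMorgan.dneg_sup, DeMorgan.dneg_sup]
    exact aux_meet19 F h1' h2' c d
  · intro a b hab
    rw [hΩ] at hab ⊢
    intro c d
    refine ⟨(hab c d).2, ?_⟩
    rw [DeMorgan.dneg_dneg, DeMorgan.dneg_dneg]
    exact (hab c d).1
  · intro a b haF hab
    rw [hΩ] at hab
    have h := (hab (a ⊔ b) (a ⊓ b)).1
    have e1 : (a ⊓ (a ⊔ b)) ⊔ (a ⊓ b) = a := by
      rw [inf_sup_self, sup_inf_self]
    have e2 : (b ⊓ (a ⊔ b)) ⊔ (a ⊓ b) = b := by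
      rw [inf_eq_left.mpr le_sup_right, sup_eq_left.mpr inf_le_right]
    rw [e1, e2] at h
    exact h.mp haF
  · intro θ hθ hcomp a b hab
    obtain ⟨hequiv, hmeet, hjoin, hneg⟩ := hθ
    rw [hΩ]
    intro c d
    have key : ∀ x y : L, θ x y → (((x ⊓ c) ⊔ d ∈ F) ↔ ((y ⊓ c) ⊔ d ∈ F)) := by
      intro x y hxy
      have h : θ ((x ⊓ c) ⊔ d) ((y ⊓ c) ⊔ d) :=
        hjoin _ _ _ _ (hmeet _ _ _ _ hxy (hequiv.refl c)) (hequiv.refl d)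
      exact ⟨fun hm => hcomp _ _ hm h, fun hm => hcomp _ _ hm (hequiv.symm h)⟩
    exact ⟨key a b hab, key _ _ (hneg a b hab)⟩
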